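/- A permutation σ ∈ 𝔖 is a Lyndon permutation if and only if φ(σ) is a Lyndon word on the alphabet ℭ of connected permutations. -/

import Mathlib

noncomputable section

namespace AdamsPaper

/-- The pseudo-lexicographic order on words associated to a (strict) order on the
alphabet: `u <_lex v` iff `u = v ++ w` for some nonempty `w`, or `u = r ++ x :: s` and
`v = r ++ y :: t` with `x < y`. -/
def ltLex {X : Type*} (ltX : X → X → Prop) (u v : List X) : Prop :=
  (∃ w : List X, w ≠ [] ∧ u = v ++ w) ∨
    ∃ (r s t : List X) (x y : X), ltX x y ∧ u = r ++ x :: s ∧ v = r ++ y :: t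

/-- The order `≺` on permutations: the pseudo-lexicographic order on one-line notation
words over `ℤ₊ = {1 < 2 < 3 < ⋯}`. -/
def permLt (u v : List ℕ) : Prop := ltLex (· < ·) u v

/-- `u` is (the one-line notation of) a permutation of `{1, …, m}`, `m = u.length`. -/
def IsPermWord (u : List ℕ) : Prop :=
  u.Nodup ∧ ∀ i ∈ u, 1 ≤ i ∧ i ≤ u.length

/-- The product `σ × τ` of permutations in one-line notation. -/
def mulX (u v : List ℕ) : List ℕ := u ++ v.map (· + u.length)

/-- The permutation `σ₁ × ⋯ × σ_r` associated to a word `(σ₁, …, σ_r)` on the alphabet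
of permutations. -/
def prodX (L : List (List ℕ)) : List ℕ := L.foldr mulX []

/-- `u` is a connected permutation: a nonempty permutation word preserving no proper
initial segment `{1, …, i}`, `1 ≤ i ≤ m − 1`. -/
def IsConnectedPerm (u : List ℕ) : Prop :=
  IsPermWord u ∧ u ≠ [] ∧ ∀ i : ℕ, 1 ≤ i → i < u.length → ¬ (∀ x ∈ u.take i, x ≤ i)

/-- A Lyndon permutation: a nonempty permutation `σ` such that `σ₂ × σ₁ ≺ σ` for every
factorization `σ = σ₁ × σ₂` with `σ₁, σ₂ ≠ θ`. -/
def IsLyndonPerm (u : List ℕ) : Prop :=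
  u ≠ [] ∧ ∀ u₁ u₂ : List ℕ, IsPermWord u₁ → IsPermWord u₂ → u₁ ≠ [] → u₂ ≠ [] →
    u = mulX u₁ u₂ → permLt (mulX u₂ u₁) u

/-- A Lyndon word on the alphabet `ℭ` of connected permutations, with respect to the
restriction of `≺` to `ℭ`. -/
def IsLyndonWordOnC (L : List (List ℕ)) : Prop :=
  L ≠ [] ∧ ∀ v w : List (List ℕ), v ≠ [] → w ≠ [] → L = v ++ w →
    ltLex permLt (w ++ v) L

section LtLexBasics

variable {X : Type*} {ltX : X → X → Prop}

theorem ltLex_nil_left (v : List X) : ¬ ltLex ltX [] v := by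
  rintro (⟨w, hw, h⟩ | ⟨r, s, t, x, y, hxy, h, h'⟩)
  · rcases List.append_eq_nil_iff.mp h.symm with ⟨-, h2⟩; exact hw h2
  · simp at h

theorem ltLex_nil_right {u : List X} : ltLex ltX u [] ↔ u ≠ [] := by
  constructor
  · rintro (⟨w, hw, h⟩ | ⟨r, s, t, x, y, hxy, h, h'⟩)
    · simpa [h] using hw
    · simp [h]
  · intro h; exact Or.inl ⟨u, h, rfl⟩

theorem ltLex_cons_cons {x y : X} {s t : List X} :
    ltLex ltX (x :: s) (y :: t) ↔ ltX x y ∨ (x = y ∧ ltLex ltX s t) := by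
  constructor
  · rintro (⟨w, hw, h⟩ | ⟨r, s', t', a, b, hab, hu, hv⟩)
    · rw [List.cons_append] at h
      obtain ⟨rfl, rfl⟩ := List.cons_eq_cons.mp h
      exact Or.inr ⟨rfl, Or.inl ⟨w, hw, rfl⟩⟩
    · cases r with
      | nil =>
        obtain ⟨rfl, rfl⟩ := List.cons_eq_cons.mp hu
        obtain ⟨rfl, rfl⟩ := List.cons_eq_cons.mp hv
        exact Or.inl hab
      | cons c r' =>
        rw [List.cons_append] at hu hv
        obtain ⟨rfl, rfl⟩ := List.cons_eq_cons.mp hu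
        obtain ⟨rfl, rfl⟩ := List.cons_eq_cons.mp hv
        exact Or.inr ⟨rfl, Or.inr ⟨r', s', t', a, b, hab, rfl, rfl⟩⟩
  · rintro (h | ⟨rfl, (⟨w, hw, rfl⟩ | ⟨r, s', t', a, b, hab, rfl, rfl⟩)⟩)
    · exact Or.inr ⟨[], s, t, x, y, h, rfl, rfl⟩
    · exact Or.inl ⟨w, hw, rfl⟩
    · exact Or.inr ⟨x :: r, s', t', a, b, hab, rfl, rfl⟩

theorem ltLex_asymm (hA : ∀ a b, ltX a b → ¬ ltX b a) :
    ∀ u v : List X, ltLex ltX u v → ¬ ltLex ltX v u := by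
  intro u
  induction u with
  | nil => intro v h; exact absurd h (ltLex_nil_left v)
  | cons x s ih =>
    intro v h h'
    cases v with
    | nil => exact ltLex_nil_left _ h'
    | cons y t =>
      rcases ltLex_cons_cons.mp h with h1 | ⟨rfl, h1⟩ <;>
        rcases ltLex_cons_cons.mp h' with h2 | ⟨h3, h2⟩
      · exact hA _ _ h1 h2
      · subst h3; exact hA _ _ h1 h1
      · exact hA _ _ h2 h2
      · exact ih t h1 h2

theorem ltLex_trichotomy (hT : ∀ a b : X, a ≠ b → ltX a b ∨ ltX b a) :
    ∀ u v : List X, u ≠ v → ltLex ltX u v ∨ ltLex ltX v u := by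
  intro u
  induction u with
  | nil =>
    intro v hv
    cases v with
    | nil => exact absurd rfl hv
    | cons y t => exact Or.inr (ltLex_nil_right.mpr (by simp))
  | cons x s ih =>
    intro v hv
    cases v with
    | nil => exact Or.inl (ltLex_nil_right.mpr (by simp))
    | cons y t =>
      by_cases hxy : x = y
      · subst hxy
        have hst : s ≠ t := fun h => hv (by rw [h])
        rcases ih t hst with h | h
        · exact Or.inl (ltLex_cons_cons.mpr (Or.inr ⟨rfl, h⟩))
        · exact Or.inr (ltLex_cons_cons.mpr (Or.inr ⟨rfl, h⟩))
      · rcases hT x y hxy with h | h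
        · exact Or.inl (ltLex_cons_cons.mpr (Or.inl h))
        · exact Or.inr (ltLex_cons_cons.mpr (Or.inl h))

theorem ltLex_map {f : X → X} (hf : ∀ a b, ltX a b → ltX (f a) (f b))
    {u v : List X} (h : ltLex ltX u v) : ltLex ltX (u.map f) (v.map f) := by
  rcases h with ⟨w, hw, rfl⟩ | ⟨r, s, t, x, y, hxy, rfl, rfl⟩
  · exact Or.inl ⟨w.map f, by simpa using hw, by simp⟩
  · exact Or.inr ⟨r.map f, s.map f, t.map f, f x, f y, hf _ _ hxy, by simp, by simp⟩

theorem ltLex_append_left (p : List X) {u v : List X} (h : ltLex ltX u v) :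
    ltLex ltX (p ++ u) (p ++ v) := by
  rcases h with ⟨w, hw, rfl⟩ | ⟨r, s, t, x, y, hxy, rfl, rfl⟩
  · exact Or.inl ⟨w, hw, by simp⟩
  · exact Or.inr ⟨p ++ r, s, t, x, y, hxy, by simp, by simp⟩

end LtLexBasics

section ProdXBasics

@[simp] theorem prodX_nil : prodX [] = [] := rfl

theorem prodX_cons (c : List ℕ) (M : List (List ℕ)) :
    prodX (c :: M) = c ++ (prodX M).map (· + c.length) := rfl

@[simp] theorem length_mulX (u v : List ℕ) :
    (mulX u v).length = u.length + v.length := by simp [mulX]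

@[simp] theorem mulX_nil_left (v : List ℕ) : mulX [] v = v := by simp [mulX]
@[simp] theorem mulX_nil_right (u : List ℕ) : mulX u [] = u := by simp [mulX]

theorem mulX_assoc (a b c : List ℕ) : mulX (mulX a b) c = mulX a (mulX b c) := by
  simp only [mulX, List.map_append, List.map_map, List.append_assoc, List.length_append,
    List.length_map]
  congr 2
  apply List.map_congr_left
  intro x _
  simp only [Function.comp_apply]
  omega

theorem prodX_append (A B : List (List ℕ)) :
    prodX (A ++ B) = mulX (prodX A) (prodX B) := by
  induction A with
  | nil => simp
  | cons a A ih =>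
    show mulX a (prodX (A ++ B)) = mulX (mulX a (prodX A)) (prodX B)
    rw [ih, mulX_assoc]

theorem length_prodX (L : List (List ℕ)) :
    (prodX L).length = (L.map List.length).sum := by
  induction L with
  | nil => simp
  | cons c M ih => simp [prodX_cons, ih]

theorem IsPermWord_nil : IsPermWord [] := ⟨List.nodup_nil, by simp⟩

theorem IsPermWord.mulX {u v : List ℕ} (hu : IsPermWord u) (hv : IsPermWord v) :
    IsPermWord (AdamsPaper.mulX u v) := by
  constructor
  · refine List.Nodup.append hu.1 (hv.1.map ?_) ?_
    · intro a b h
      have h' : a + u.length = b + u.length := h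
      omega
    · intro a ha hb
      obtain ⟨b, hbv, hb'⟩ := List.mem_map.mp hb
      have hb2 : b + u.length = a := hb'
      have h1 := (hu.2 a ha).2
      have h2 := (hv.2 b hbv).1
      omega
  · intro i hi
    rw [length_mulX]
    rcases List.mem_append.mp hi with h | h
    · have := hu.2 i h; omega
    · obtain ⟨b, hbv, hb'⟩ := List.mem_map.mp h
      have hb2 : b + u.length = i := hb'
      have := hv.2 b hbv; omega

theorem IsPermWord_prodX {L : List (List ℕ)} (h : ∀ τ ∈ L, IsPermWord τ) :
    IsPermWord (prodX L) := by
  induction L with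
  | nil => exact IsPermWord_nil
  | cons c M ih =>
    exact (h c (by simp)).mulX (ih fun τ hτ => h τ (by simp [hτ]))

theorem prodX_ne_nil {L : List (List ℕ)} (hL : L ≠ []) (h : ∀ τ ∈ L, τ ≠ []) :
    prodX L ≠ [] := by
  cases L with
  | nil => exact absurd rfl hL
  | cons c M =>
    rw [prodX_cons]
    simp [h c (by simp)]

end ProdXBasics

theorem permLt_asymm : ∀ u v : List ℕ, permLt u v → ¬ permLt v u :=
  ltLex_asymm fun _ _ h h' => Nat.lt_asymm h h'

theorem permLt_trichotomy : ∀ u v : List ℕ, u ≠ v → permLt u v ∨ permLt v u :=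
  ltLex_trichotomy fun _ _ h => Nat.lt_or_lt_of_ne h

theorem permLt_irrefl (u : List ℕ) : ¬ permLt u u := fun h => permLt_asymm u u h h

theorem IsConnectedPerm.ne_nil {u : List ℕ} (h : IsConnectedPerm u) : u ≠ [] := h.2.1

/-- Core comparison: if `x ≺ y` with `x` connected and `y` a nonempty permutation word,
then `x` followed by anything is `≺` `y` followed by anything. -/
theorem core_lt {x y P Q : List ℕ} (hx : IsConnectedPerm x) (hy : IsConnectedPerm y)
    (hxy : permLt x y) :
    permLt (x ++ P) (y ++ Q) := by
  rcases hxy with ⟨w, hw, hxw⟩ | ⟨r, s, t, a, b, hab, hxe, hye⟩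
  · -- x = y ++ w : impossible since x is connected
    exfalso
    have hylen : 1 ≤ y.length := by
      cases y with
      | nil => exact absurd rfl hy.ne_nil
      | cons _ _ => simp
    have hlt : y.length < x.length := by
      rw [hxw, List.length_append]
      have : 1 ≤ w.length := by
        cases w with
        | nil => exact absurd rfl hw
        | cons _ _ => simp
      omega
    refine hx.2.2 y.length hylen hlt ?_
    intro z hz
    rw [hxw, List.take_left] at hz
    exact (hy.1.2 z hz).2
  · refine Or.inr ⟨r, s ++ P, t ++ Q, a, b, hab, ?_, ?_⟩
    · rw [hxe]; simp
    · rw [hye]; simp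

/-- Key lemma: `ψ` is order-preserving from `(⟨ℭ⟩, lex)` to `(𝔖, ≺)`. -/
theorem permLt_prodX {A B : List (List ℕ)} (hA : ∀ τ ∈ A, IsConnectedPerm τ)
    (hB : ∀ τ ∈ B, IsConnectedPerm τ) (h : ltLex permLt A B) :
    permLt (prodX A) (prodX B) := by
  rcases h with ⟨W, hW, hAW⟩ | ⟨r, s, t, x, y, hxy, hAe, hBe⟩
  · subst hAW
    rw [prodX_append]
    refine Or.inl ⟨(prodX W).map (· + (prodX B).length), ?_, rfl⟩
    have hWne : prodX W ≠ [] := prodX_ne_nil hW fun τ hτ =>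
      (hA τ (List.mem_append.mpr (Or.inr hτ))).ne_nil
    simpa using hWne
  · subst hAe; subst hBe
    rw [prodX_append, prodX_append, mulX, mulX]
    apply ltLex_append_left
    apply ltLex_map (f := (· + (prodX r).length)) (fun a b hab => Nat.add_lt_add_right hab _)
    rw [prodX_cons, prodX_cons]
    exact core_lt (hA x (by simp)) (hB y (by simp)) hxy

theorem ltLex_permLt_of_permLt_prodX {A B : List (List ℕ)}
    (hA : ∀ τ ∈ A, IsConnectedPerm τ) (hB : ∀ τ ∈ B, IsConnectedPerm τ)
    (h : permLt (prodX A) (prodX B)) : ltLex permLt A B := by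
  by_cases hAB : A = B
  · subst hAB; exact absurd h (permLt_irrefl _)
  · rcases ltLex_trichotomy permLt_trichotomy A B hAB with h' | h'
    · exact h'
    · exact absurd h (permLt_asymm _ _ (permLt_prodX hB hA h'))

/-- Splitting lemma: any "break point" of `prodX L` occurs at a boundary between the
connected factors. -/
theorem split_lemma : ∀ (L : List (List ℕ)), (∀ τ ∈ L, IsConnectedPerm τ) →
    ∀ i : ℕ, 1 ≤ i → i < (prodX L).length → (∀ x ∈ (prodX L).take i, x ≤ i) →
    ∃ v w : List (List ℕ), v ≠ [] ∧ w ≠ [] ∧ L = v ++ w ∧ (prodX v).length = i := by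
  intro L
  induction L with
  | nil => intro _ i h1 h2 _; simp at h2
  | cons c M ih =>
    intro hconn i h1 h2 h3
    have hc : IsConnectedPerm c := hconn c (by simp)
    set m := c.length with hm
    rcases lt_trichotomy i m with hlt | heq | hgt
    · exfalso
      refine hc.2.2 i h1 hlt ?_
      intro z hz
      apply h3
      rw [prodX_cons, List.take_append_of_le_length (by omega)]
      exact hz
    · refine ⟨[c], M, by simp, ?_, by simp, ?_⟩
      · rw [prodX_cons, List.length_append, List.length_map] at h2
        intro hM
        rw [hM] at h2
        simp at h2
        omega
      · show (prodX ([c] ++ [])).length = i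
        simp [prodX_cons, heq, hm]
    · have hPM : i - m < (prodX M).length := by
        rw [prodX_cons, List.length_append, List.length_map] at h2
        omega
      have h3' : ∀ x ∈ (prodX M).take (i - m), x ≤ i - m := by
        intro z hz
        have hmem : z + m ∈ (prodX (c :: M)).take i := by
          rw [prodX_cons]
          rw [List.take_append]
          apply List.mem_append.mpr
          right
          have h5 : z + m ∈ (((prodX M).take (i - m)).map (· + m)) :=
            List.mem_map.mpr ⟨z, hz, rfl⟩
          rw [List.map_take] at h5
          exact h5
        have := h3 _ hmem
        omega
      obtain ⟨v', w', hv', hw', hMe, hlen'⟩ := ih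
        (fun τ hτ => hconn τ (by simp [hτ])) (i - m) (by omega) hPM h3'
      refine ⟨c :: v', w', by simp, hw', by rw [hMe]; rfl, ?_⟩
      rw [prodX_cons, List.length_append, List.length_map, hlen']
      omega

/-- **Lemma.** A permutation `σ` is a Lyndon permutation if and only if `φ(σ)`, the
word of connected permutations of its unique `×`-factorization, is a Lyndon word on the
alphabet `ℭ`. -/
theorem lyndonPerm_iff_lyndonWord :
    ∀ (u : List ℕ) (L : List (List ℕ)), IsPermWord u →
      (∀ τ ∈ L, IsConnectedPerm τ) → prodX L = u →
      (IsLyndonPerm u ↔ IsLyndonWordOnC L) := by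
  intro u L hu hL hLu
  constructor
  · rintro ⟨hune, hlyn⟩
    constructor
    · intro hLnil; rw [hLnil] at hLu; exact hune hLu.symm
    · intro v w hv hw hvw
      have hvC : ∀ τ ∈ v, IsConnectedPerm τ := fun τ hτ =>
        hL τ (by rw [hvw]; exact List.mem_append.mpr (Or.inl hτ))
      have hwC : ∀ τ ∈ w, IsConnectedPerm τ := fun τ hτ =>
        hL τ (by rw [hvw]; exact List.mem_append.mpr (Or.inr hτ))
      have h1 : IsPermWord (prodX v) := IsPermWord_prodX fun τ hτ => (hvC τ hτ).1
      have h2 : IsPermWord (prodX w) := IsPermWord_prodX fun τ hτ => (hwC τ hτ).1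
      have h3 : prodX v ≠ [] := prodX_ne_nil hv fun τ hτ => (hvC τ hτ).ne_nil
      have h4 : prodX w ≠ [] := prodX_ne_nil hw fun τ hτ => (hwC τ hτ).ne_nil
      have h5 : u = mulX (prodX v) (prodX w) := by
        rw [← hLu, hvw, prodX_append]
      have h6 := hlyn (prodX v) (prodX w) h1 h2 h3 h4 h5
      rw [← prodX_append, ← hLu] at h6
      exact ltLex_permLt_of_permLt_prodX
        (fun τ hτ => by rcases List.mem_append.mp hτ with h | h
                        exacts [hwC τ h, hvC τ h]) hL h6
  · rintro ⟨hLne, hlyn⟩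
    constructor
    · rw [← hLu]
      exact prodX_ne_nil hLne fun τ hτ => (hL τ hτ).ne_nil
    · intro u₁ u₂ hu₁ hu₂ hu₁ne hu₂ne hfac
      set i := u₁.length with hi
      have hi1 : 1 ≤ i := by
        cases u₁ with
        | nil => exact absurd rfl hu₁ne
        | cons _ _ => simp [hi]
      have hilt : i < (prodX L).length := by
        rw [hLu, hfac, length_mulX]
        have : 1 ≤ u₂.length := by
          cases u₂ with
          | nil => exact absurd rfl hu₂ne
          | cons _ _ => simp
        omega
      have htake : (prodX L).take i = u₁ := by
        rw [hLu, hfac, mulX, hi, List.take_left]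
      have hbound : ∀ x ∈ (prodX L).take i, x ≤ i := by
        rw [htake]; intro x hx; exact (hu₁.2 x hx).2
      obtain ⟨v, w, hv, hw, hvw, hlen⟩ := split_lemma L hL i hi1 hilt hbound
      have hvC : ∀ τ ∈ v, IsConnectedPerm τ := fun τ hτ =>
        hL τ (by rw [hvw]; exact List.mem_append.mpr (Or.inl hτ))
      have hwC : ∀ τ ∈ w, IsConnectedPerm τ := fun τ hτ =>
        hL τ (by rw [hvw]; exact List.mem_append.mpr (Or.inr hτ))
      have heq : u₁ ++ u₂.map (· + i) = prodX v ++ (prodX w).map (· + i) := by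
        have h0 : prodX L = mulX (prodX v) (prodX w) := by rw [hvw, prodX_append]
        rw [hLu, hfac] at h0
        rw [mulX, mulX, hlen, ← hi] at h0
        exact h0
      have hlen1 : u₁.length = (prodX v).length := by rw [hlen, ← hi]
      obtain ⟨he1, he2⟩ := List.append_inj heq hlen1
      have he2' : u₂ = prodX w := by
        have hinj : Function.Injective (· + i : ℕ → ℕ) := fun a b h => by
          have h' : a + i = b + i := h
          omega
        exact List.map_injective_iff.mpr hinj he2
      have h7 := hlyn v w hv hw hvw
      have h8 := permLt_prodX
        (fun τ hτ => by rcases List.mem_append.mp hτ with h | h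
                        exacts [hwC τ h, hvC τ h]) hL h7
      rw [prodX_append, ← he1, ← he2', hLu] at h8
      rw [mulX]
      exact h8

end AdamsPaper

end
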